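/- Fix a positive integer q and define g_q(x) = ∏_{j=1}^q (1 − (jx)²)^⌊q/j⌋. For every positive integer b, there exists a polynomial s of degree at most 2bq such that for all k ≥ 0, (1/k!) · sup_{|x| ≤ 1/(8q)} |(1/g_q − s)^(k)(x)| ≤ 2^(−bq) (8q)^k. In particular, (1/2)(1/g_q(x)) ≤ s(x) ≤ (3/2)(1/g_q(x)) for all |x| ≤ 1/(8q). -/

import Mathlib

open Complex Metric Finset ENNReal NNReal

/-- The Weingarten denominator `g_q(x) = ∏_{j=1}^q (1 - (jx)²)^⌊q/j⌋`. -/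
noncomputable def gq (q : ℕ) (x : ℝ) : ℝ :=
  ∏ j ∈ Finset.Icc 1 q, (1 - ((j : ℝ) * x) ^ 2) ^ (q / j)

/-- Complex version of `gq`. -/
noncomputable def Gc (q : ℕ) (z : ℂ) : ℂ :=
  ∏ j ∈ Finset.Icc 1 q, (1 - ((j : ℂ) * z) ^ 2) ^ (q / j)

/-- Lower bound constant for `‖Gc q‖` on the ball of radius `1/(2q)`. -/
noncomputable def Pq (q : ℕ) : ℝ :=
  ∏ j ∈ Finset.Icc 1 q, (1 - ((j : ℝ) / (2 * q)) ^ 2) ^ (q / j)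

lemma Gc_ofReal (q : ℕ) (x : ℝ) : Gc q (x : ℂ) = ((gq q x : ℝ) : ℂ) := by
  rw [Gc, gq]
  push_cast
  rfl

lemma Gc_diff (q : ℕ) : Differentiable ℂ (Gc q) := by
  unfold Gc
  fun_prop

lemma factor_lb {q j : ℕ} (hj : j ∈ Finset.Icc 1 q) : ((j : ℝ) / (2 * q)) ^ 2 ≤ 1 / 4 := by
  simp only [Finset.mem_Icc] at hj
  have hq : (1 : ℝ) ≤ q := by exact_mod_cast hj.1.trans hj.2
  have hjq : (j : ℝ) ≤ q := by exact_mod_cast hj.2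
  have h1 : (j : ℝ) / (2 * q) ≤ 1 / 2 := by
    rw [div_le_div_iff₀ (by positivity) (by norm_num)]
    linarith
  have h0 : (0 : ℝ) ≤ (j : ℝ) / (2 * q) := by positivity
  nlinarith

lemma Pq_pos {q : ℕ} (hq : 0 < q) : 0 < Pq q := by
  apply Finset.prod_pos
  intro j hj
  have h := factor_lb hj
  have : (0 : ℝ) < 1 - ((j : ℝ) / (2 * q)) ^ 2 := by linarith
  positivity

lemma norm_Gc_lower {q : ℕ} (hq : 0 < q) {z : ℂ} (hz : ‖z‖ ≤ (2 * (q : ℝ))⁻¹) :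
    Pq q ≤ ‖Gc q z‖ := by
  rw [Gc, norm_prod]
  apply Finset.prod_le_prod
  · intro j hj
    have h := factor_lb hj
    have : (0 : ℝ) < 1 - ((j : ℝ) / (2 * q)) ^ 2 := by linarith
    positivity
  · intro j hj
    rw [norm_pow]
    apply pow_le_pow_left₀ (by nlinarith [factor_lb hj])
    have hjq : (j : ℝ) ≤ q := by
      simp only [Finset.mem_Icc] at hj; exact_mod_cast hj.2
    have hj0 : (0 : ℝ) ≤ j := by positivity
    have hnorm : ‖((j : ℂ) * z) ^ 2‖ ≤ ((j : ℝ) / (2 * q)) ^ 2 := by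
      rw [norm_pow, norm_mul, Complex.norm_natCast]
      apply pow_le_pow_left₀ (by positivity)
      calc (j : ℝ) * ‖z‖ ≤ (j : ℝ) * (2 * (q : ℝ))⁻¹ := by
            exact mul_le_mul_of_nonneg_left hz hj0
        _ = (j : ℝ) / (2 * q) := by rw [div_eq_mul_inv]
    calc 1 - ((j : ℝ) / (2 * q)) ^ 2 ≤ 1 - ‖((j : ℂ) * z) ^ 2‖ := by linarith
      _ = ‖(1 : ℂ)‖ - ‖((j : ℂ) * z) ^ 2‖ := by simp
      _ ≤ ‖1 - ((j : ℂ) * z) ^ 2‖ := norm_sub_norm_le _ _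

lemma exp_neg_le {t : ℝ} (h0 : 0 ≤ t) (h4 : t ≤ 1 / 4) : Real.exp (-(4 / 3 * t)) ≤ 1 - t := by
  have h1 : 4 / 3 * t + 1 ≤ Real.exp (4 / 3 * t) := Real.add_one_le_exp _
  have h2 : Real.exp (-(4 / 3 * t)) * Real.exp (4 / 3 * t) = 1 := by
    rw [← Real.exp_add]; simp
  nlinarith [Real.exp_pos (-(4 / 3 * t)),
    mul_le_mul_of_nonneg_left h1 (Real.exp_pos (-(4 / 3 * t))).le]

lemma sum_Icc_cast (q : ℕ) : ∑ j ∈ Finset.Icc 1 q, (j : ℝ) = q * (q + 1) / 2 := by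
  induction q with
  | zero => simp
  | succ n ih =>
    rw [Finset.sum_Icc_succ_top (by omega)]
    push_cast
    rw [ih]
    ring

lemma Pq_inv_le {q : ℕ} (hq : 0 < q) : (Pq q)⁻¹ ≤ 2 ^ q := by
  have hQ : (1 : ℝ) ≤ q := by exact_mod_cast hq
  have hq0 : (0 : ℝ) < q := by linarith
  have hterm : ∀ j ∈ Finset.Icc 1 q,
      ((q / j : ℕ) : ℝ) * (4 / 3 * ((j : ℝ) / (2 * q)) ^ 2) ≤ (j : ℝ) / (3 * q) := by
    intro j hj
    obtain ⟨hj1, hj2⟩ := Finset.mem_Icc.mp hj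
    have hj0 : (0 : ℝ) < j := by exact_mod_cast hj1
    have hcast : ((q / j : ℕ) : ℝ) ≤ (q : ℝ) / (j : ℝ) := Nat.cast_div_le
    calc ((q / j : ℕ) : ℝ) * (4 / 3 * ((j : ℝ) / (2 * q)) ^ 2)
        ≤ ((q : ℝ) / j) * (4 / 3 * ((j : ℝ) / (2 * q)) ^ 2) :=
          mul_le_mul_of_nonneg_right hcast (by positivity)
      _ = (j : ℝ) / (3 * q) := by field_simp; ring
  have hS : ∑ j ∈ Finset.Icc 1 q, ((q / j : ℕ) : ℝ) * (4 / 3 * ((j : ℝ) / (2 * q)) ^ 2)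
      ≤ ((q : ℝ) + 1) / 6 := by
    calc _ ≤ ∑ j ∈ Finset.Icc 1 q, (j : ℝ) / (3 * q) := Finset.sum_le_sum hterm
      _ = (∑ j ∈ Finset.Icc 1 q, (j : ℝ)) / (3 * q) := by rw [Finset.sum_div]
      _ = ((q : ℝ) + 1) / 6 := by rw [sum_Icc_cast]; field_simp; ring
  have hPq : Real.exp (-(((q : ℝ) + 1) / 6)) ≤ Pq q := by
    calc Real.exp (-(((q : ℝ) + 1) / 6))
        ≤ Real.exp (-∑ j ∈ Finset.Icc 1 q,
            ((q / j : ℕ) : ℝ) * (4 / 3 * ((j : ℝ) / (2 * q)) ^ 2)) := by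
          apply Real.exp_le_exp.mpr; linarith
      _ = ∏ j ∈ Finset.Icc 1 q,
            Real.exp (-(4 / 3 * ((j : ℝ) / (2 * q)) ^ 2)) ^ (q / j : ℕ) := by
          have hfac : ∀ j ∈ Finset.Icc 1 q,
              Real.exp (-(4 / 3 * ((j : ℝ) / (2 * q)) ^ 2)) ^ (q / j : ℕ)
                = Real.exp (-(((q / j : ℕ) : ℝ) * (4 / 3 * ((j : ℝ) / (2 * q)) ^ 2))) := by
            intro j hj
            rw [← Real.exp_nat_mul]
            ring_nf
          rw [Finset.prod_congr rfl hfac, ← Real.exp_sum, ← Finset.sum_neg_distrib]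
      _ ≤ Pq q := by
          apply Finset.prod_le_prod
          · intro j hj; positivity
          · intro j hj
            exact pow_le_pow_left₀ (Real.exp_pos _).le
              (exp_neg_le (by positivity) (factor_lb hj)) _
  have hPpos : 0 < Pq q := lt_of_lt_of_le (Real.exp_pos _) hPq
  have h1 : (Pq q)⁻¹ ≤ Real.exp (((q : ℝ) + 1) / 6) := by
    rw [show Real.exp (((q : ℝ) + 1) / 6) = (Real.exp (-(((q : ℝ) + 1) / 6)))⁻¹ by
      rw [Real.exp_neg, inv_inv]]
    exact inv_anti₀ (Real.exp_pos _) hPq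
  have h2 : Real.exp (((q : ℝ) + 1) / 6) ≤ Real.exp (1 / 3) ^ q := by
    rw [← Real.exp_nat_mul]
    apply Real.exp_le_exp.mpr
    rw [mul_one_div]
    linarith
  have h3 : Real.exp (1 / 3) ≤ 2 := by
    have hc : Real.exp (1 / 3) ^ 3 = Real.exp 1 := by
      rw [← Real.exp_nat_mul]; norm_num
    have : Real.exp (1 / 3) ^ 3 ≤ 2 ^ 3 := by
      rw [hc]; nlinarith [Real.exp_one_lt_d9.le]
    exact le_of_pow_le_pow_left₀ (by norm_num) (by norm_num) this
  calc (Pq q)⁻¹ ≤ Real.exp (1 / 3) ^ q := h1.trans h2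
    _ ≤ 2 ^ q := pow_le_pow_left₀ (Real.exp_pos _).le h3 _

lemma cauchy_coeff_bound {f : ℂ → ℂ} {c : ℂ} {R M : ℝ} (hR : 0 < R)
    (hf : ContinuousOn f (Metric.sphere c R))
    (hM : ∀ z ∈ Metric.sphere c R, ‖f z‖ ≤ M) (n : ℕ) :
    ‖cauchyPowerSeries f c R n‖ ≤ M * R⁻¹ ^ n := by
  refine (norm_cauchyPowerSeries_le f c R n).trans ?_
  rw [abs_of_pos hR]
  have hcont : Continuous fun θ : ℝ => f (circleMap c R θ) := by
    rw [← continuousOn_univ]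
    exact hf.comp (continuous_circleMap c R).continuousOn
      (fun θ _ => circleMap_mem_sphere c hR.le θ)
  have hint : (∫ θ : ℝ in (0)..2 * Real.pi, ‖f (circleMap c R θ)‖) ≤ (2 * Real.pi) * M := by
    have := intervalIntegral.integral_mono_on (a := 0) (b := 2 * Real.pi)
      (f := fun θ => ‖f (circleMap c R θ)‖) (g := fun _ => M)
      (by positivity) (hcont.norm.intervalIntegrable (μ := MeasureTheory.volume) _ _)
      intervalIntegrable_const
      (fun θ _ => hM _ (circleMap_mem_sphere c hR.le θ))
    simpa using this
  have h2 : (2 * Real.pi)⁻¹ * (∫ θ : ℝ in (0)..2 * Real.pi, ‖f (circleMap c R θ)‖) ≤ M := by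
    rw [inv_mul_le_iff₀ (by positivity)]
    linarith [hint]
  exact mul_le_mul_of_nonneg_right h2 (by positivity)

lemma iteratedDeriv_re_comp {U : Set ℂ} (hU : IsOpen U) {E : ℂ → ℂ}
    (hE : AnalyticOnNhd ℂ E U) {f : ℝ → ℝ}
    (hf : ∀ y : ℝ, (y : ℂ) ∈ U → f y = (E y).re) :
    ∀ (k : ℕ) (x : ℝ), (x : ℂ) ∈ U → iteratedDeriv k f x = (iteratedDeriv k E x).re := by
  intro k
  induction k with
  | zero => intro x hx; simpa using hf x hx
  | succ k ih =>
    intro x hx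
    have hEk : AnalyticOnNhd ℂ (iteratedDeriv k E) U := by
      rw [iteratedDeriv_eq_iterate]
      exact hE.iterated_deriv k
    have hopen : IsOpen {y : ℝ | (y : ℂ) ∈ U} := hU.preimage Complex.continuous_ofReal
    have hev : iteratedDeriv k f =ᶠ[nhds x] fun y : ℝ => (iteratedDeriv k E y).re := by
      filter_upwards [hopen.mem_nhds hx] with y hy using ih y hy
    rw [iteratedDeriv_succ, hev.deriv_eq]
    have hd : HasDerivAt (iteratedDeriv k E) (iteratedDeriv (k + 1) E x) (x : ℂ) := by
      have h1 := (hEk _ hx).differentiableAt.hasDerivAt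
      rwa [iteratedDeriv_succ]
    exact hd.real_of_complex.deriv

/-- **Polynomial approximation of `1/g_q`.**  For every `b ≥ 1` there is a polynomial `s`
of degree at most `2bq` such that `(1/k!)·sup_{|x| ≤ 1/(8q)} |(1/g_q - s)^(k)| ≤
2^(-bq)(8q)^k` for all `k ≥ 0`; in particular `(1/2)(1/g_q) ≤ s ≤ (3/2)(1/g_q)` on
`[-1/(8q), 1/(8q)]`. -/
theorem stmt_8 (q : ℕ) (hq : 0 < q) (b : ℕ) (hb : 0 < b) :
    ∃ s : Polynomial ℝ, s.natDegree ≤ 2 * b * q ∧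
      (∀ k : ℕ, ∀ x : ℝ, |x| ≤ 1 / (8 * q) →
        |iteratedDeriv k (fun y => 1 / gq q y - s.eval y) x| ≤
          (k.factorial : ℝ) * ((2 : ℝ)⁻¹) ^ (b * q) * (8 * (q : ℝ)) ^ k) ∧
      (∀ x : ℝ, |x| ≤ 1 / (8 * q) →
        (1 / 2) * (1 / gq q x) ≤ s.eval x ∧ s.eval x ≤ (3 / 2) * (1 / gq q x)) := by
  have hQ : (1 : ℝ) ≤ q := by exact_mod_cast hq
  have hQ0 : (0 : ℝ) < q := by linarith
  set Q : ℝ := (q : ℝ) with hQdef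
  have hPpos : 0 < Pq q := Pq_pos hq
  set M : ℝ := (Pq q)⁻¹ with hMdef
  have hMpos : 0 < M := by positivity
  set F : ℂ → ℂ := fun z => (Gc q z)⁻¹ with hFdef
  -- differentiability of F on the closed ball of radius (2Q)⁻¹
  have hGne : ∀ z ∈ closedBall (0 : ℂ) ((2 * Q)⁻¹), Gc q z ≠ 0 := by
    intro z hz
    rw [mem_closedBall_zero_iff] at hz
    have := norm_Gc_lower hq hz
    intro h0
    rw [h0, norm_zero] at this
    linarith
  have hFdiff : DifferentiableOn ℂ F (closedBall (0 : ℂ) ((2 * Q)⁻¹)) :=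
    ((Gc_diff q).differentiableOn).inv hGne
  -- power series of F at 0 with radius (2Q)⁻¹
  set R1 : NNReal := ⟨(2 * Q)⁻¹, by positivity⟩ with hR1def
  have hR1coe : ((R1 : NNReal) : ℝ) = (2 * Q)⁻¹ := rfl
  have hR1pos : 0 < R1 := by
    rw [← NNReal.coe_lt_coe, hR1coe]
    positivity
  have hFps : HasFPowerSeriesOnBall F (cauchyPowerSeries F 0 ((2 * Q)⁻¹)) 0 R1 := by
    have := hFdiff.hasFPowerSeriesOnBall (R := R1) hR1pos
    exact this
  set p : FormalMultilinearSeries ℂ ℂ ℂ := cauchyPowerSeries F 0 ((2 * Q)⁻¹) with hpdef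
  -- coefficient bounds
  have hFbound : ∀ z ∈ Metric.sphere (0 : ℂ) ((2 * Q)⁻¹), ‖F z‖ ≤ M := by
    intro z hz
    rw [mem_sphere_zero_iff_norm] at hz
    have hlow := norm_Gc_lower hq (le_of_eq hz)
    rw [hFdef]
    simp only [norm_inv]
    exact inv_anti₀ hPpos hlow
  have hcoeff : ∀ m : ℕ, ‖p.coeff m‖ ≤ M * (2 * Q) ^ m := by
    intro m
    have h1 : ‖p.coeff m‖ = ‖p m‖ := (p.norm_apply_eq_norm_coef (n := m)).symm
    have h2 : ‖p m‖ ≤ M * ((2 * Q)⁻¹)⁻¹ ^ m := by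
      exact cauchy_coeff_bound (by positivity)
        (hFdiff.continuousOn.mono sphere_subset_closedBall) hFbound m
    rw [inv_inv] at h2
    rw [h1]; exact h2
  -- the polynomial
  set n : ℕ := 2 * b * q with hndef
  set s : Polynomial ℝ := ∑ m ∈ Finset.range (n + 1),
    Polynomial.C ((p.coeff m).re) * Polynomial.X ^ m with hsdef
  have hsdeg : s.natDegree ≤ 2 * b * q := by
    rw [hsdef]
    apply Polynomial.natDegree_sum_le_of_forall_le
    intro m hm
    calc (Polynomial.C ((p.coeff m).re) * Polynomial.X ^ m).natDegree
        ≤ (Polynomial.X ^ m : Polynomial ℝ).natDegree := Polynomial.natDegree_C_mul_le _ _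
      _ = m := Polynomial.natDegree_X_pow m
      _ ≤ 2 * b * q := by
          have := Finset.mem_range.mp hm
          omega
  have hseval : ∀ y : ℝ, s.eval y = ∑ m ∈ Finset.range (n + 1), (p.coeff m).re * y ^ m := by
    intro y
    rw [hsdef, Polynomial.eval_finset_sum]
    simp
  -- the error function
  set E : ℂ → ℂ := fun z => F z - ∑ m ∈ Finset.range (n + 1), p.coeff m * z ^ m with hEdef
  -- tail bound for E
  have htail : ∀ z : ℂ, ‖z‖ ≤ (4 * Q)⁻¹ → ‖E z‖ ≤ M * (2 : ℝ)⁻¹ ^ n := by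
    intro z hz
    have hzlt : ‖z‖ < (2 * Q)⁻¹ := by
      have : (4 * Q)⁻¹ < (2 * Q)⁻¹ := by
        apply inv_strictAnti₀ (by positivity)
        linarith
      linarith
    have hmem : z ∈ Metric.eball (0 : ℂ) R1 := by
      rw [mem_eball_zero_iff, enorm_eq_nnnorm]
      rw [show ((‖z‖₊ : ℝ≥0∞) < (R1 : ℝ≥0∞)) ↔ (‖z‖₊ < R1) from ENNReal.coe_lt_coe]
      rw [← NNReal.coe_lt_coe, coe_nnnorm, hR1coe]
      exact hzlt
    have hsum0 := hFps.hasSum hmem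
    rw [zero_add] at hsum0
    have hs : HasSum (fun m => p.coeff m * z ^ m) (F z) := by
      have : (fun m => p m fun _ => z) = fun m => p.coeff m * z ^ m := by
        funext m
        rw [p.apply_eq_pow_smul_coeff, smul_eq_mul, mul_comm]
      rwa [this] at hsum0
    have hsummable := hs.summable
    have hsplit := Summable.sum_add_tsum_nat_add (f := fun m => p.coeff m * z ^ m) (n + 1) hsummable
    have hEz : E z = ∑' i : ℕ, p.coeff (i + (n + 1)) * z ^ (i + (n + 1)) := by
      rw [hEdef]
      simp only
      rw [← hs.tsum_eq, ← hsplit]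
      ring
    have hterm : ∀ i : ℕ, ‖p.coeff (i + (n + 1)) * z ^ (i + (n + 1))‖
        ≤ (M * (2 : ℝ)⁻¹ ^ (n + 1)) * (2 : ℝ)⁻¹ ^ i := by
      intro i
      rw [norm_mul, norm_pow]
      calc ‖p.coeff (i + (n + 1))‖ * ‖z‖ ^ (i + (n + 1))
          ≤ (M * (2 * Q) ^ (i + (n + 1))) * ((4 * Q)⁻¹) ^ (i + (n + 1)) := by
            apply mul_le_mul (hcoeff _) (pow_le_pow_left₀ (norm_nonneg z) hz _)
              (by positivity) (by positivity)
        _ = (M * (2 : ℝ)⁻¹ ^ (n + 1)) * (2 : ℝ)⁻¹ ^ i := by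
            rw [mul_assoc, ← mul_pow,
              show (2 * Q) * (4 * Q)⁻¹ = (2:ℝ)⁻¹ from by field_simp; ring, pow_add]
            ring
    have hgsum : Summable (fun i : ℕ => (M * (2 : ℝ)⁻¹ ^ (n + 1)) * (2 : ℝ)⁻¹ ^ i) :=
      (summable_geometric_of_lt_one (by norm_num) (by norm_num)).mul_left _
    have hnsummable : Summable (fun i : ℕ => ‖p.coeff (i + (n + 1)) * z ^ (i + (n + 1))‖) :=
      Summable.of_nonneg_of_le (fun i => norm_nonneg _) hterm hgsum
    calc ‖E z‖ = ‖∑' i : ℕ, p.coeff (i + (n + 1)) * z ^ (i + (n + 1))‖ := by rw [hEz]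
      _ ≤ ∑' i : ℕ, ‖p.coeff (i + (n + 1)) * z ^ (i + (n + 1))‖ :=
          norm_tsum_le_tsum_norm hnsummable
      _ ≤ ∑' i : ℕ, (M * (2 : ℝ)⁻¹ ^ (n + 1)) * (2 : ℝ)⁻¹ ^ i :=
          Summable.tsum_le_tsum hterm hnsummable hgsum
      _ = (M * (2 : ℝ)⁻¹ ^ (n + 1)) * (1 - 2⁻¹)⁻¹ := by
          rw [_root_.tsum_mul_left, tsum_geometric_of_lt_one (by norm_num) (by norm_num)]
      _ = M * (2 : ℝ)⁻¹ ^ n := by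
          rw [show ((1:ℝ) - 2⁻¹)⁻¹ = 2 from by norm_num, pow_succ]
          ring
  -- the key numeric bound
  have hdelta : M * (2 : ℝ)⁻¹ ^ n ≤ (2 : ℝ)⁻¹ ^ (b * q) := by
    have hM2 : M ≤ 2 ^ (b * q) := by
      calc M ≤ 2 ^ q := Pq_inv_le hq
        _ ≤ 2 ^ (b * q) := by
            apply pow_le_pow_right₀ one_le_two
            exact Nat.le_mul_of_pos_left q hb
    calc M * (2 : ℝ)⁻¹ ^ n ≤ 2 ^ (b * q) * (2 : ℝ)⁻¹ ^ n := by
          exact mul_le_mul_of_nonneg_right hM2 (by positivity)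
      _ = (2 : ℝ)⁻¹ ^ (b * q) := by
          rw [hndef, show 2 * b * q = b * q + b * q from by ring, pow_add, ← mul_assoc,
            ← mul_pow]
          norm_num
  -- differentiability and analyticity of E
  have hEdiff : DifferentiableOn ℂ E (closedBall (0 : ℂ) ((2 * Q)⁻¹)) := by
    apply hFdiff.sub
    apply Differentiable.differentiableOn
    fun_prop
  set U : Set ℂ := ball (0 : ℂ) ((2 * Q)⁻¹) with hUdef
  have hEanal : AnalyticOnNhd ℂ E U :=
    (hEdiff.mono ball_subset_closedBall).analyticOnNhd isOpen_ball
  -- the real error function agrees with Re ∘ E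
  have hfe : ∀ y : ℝ, (y : ℂ) ∈ U →
      (fun y => 1 / gq q y - s.eval y) y = (E (y : ℂ)).re := by
    intro y _
    have hF : F (y : ℂ) = ((gq q y)⁻¹ : ℝ) := by
      rw [hFdef]
      simp only
      rw [Gc_ofReal, ← Complex.ofReal_inv]
    rw [hEdef]
    simp only
    rw [Complex.sub_re, hF, Complex.ofReal_re, Complex.re_sum, hseval, one_div]
    congr 1
    apply Finset.sum_congr rfl
    intro m _
    rw [show ((y : ℂ)) ^ m = ((y ^ m : ℝ) : ℂ) from by push_cast; rfl]
    rw [Complex.mul_re, Complex.ofReal_re, Complex.ofReal_im]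
    ring
  -- main derivative bound
  have hmain : ∀ k : ℕ, ∀ x : ℝ, |x| ≤ 1 / (8 * Q) →
      |iteratedDeriv k (fun y => 1 / gq q y - s.eval y) x| ≤
        (k.factorial : ℝ) * ((2 : ℝ)⁻¹) ^ (b * q) * (8 * Q) ^ k := by
    intro k x hx
    have hxnorm : ‖(x : ℂ)‖ ≤ (8 * Q)⁻¹ := by
      rw [Complex.norm_real, Real.norm_eq_abs]
      rw [one_div] at hx
      exact hx
    have hxU : (x : ℂ) ∈ U := by
      rw [hUdef, mem_ball_zero_iff]
      have : (8 * Q)⁻¹ < (2 * Q)⁻¹ := by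
        apply inv_strictAnti₀ (by positivity)
        linarith
      linarith
    have hstep1 : iteratedDeriv k (fun y => 1 / gq q y - s.eval y) x
        = (iteratedDeriv k E (x : ℂ)).re :=
      iteratedDeriv_re_comp isOpen_ball hEanal hfe k x hxU
    -- power series of E centered at x with radius (8Q)⁻¹
    have hquarter : (8 * Q)⁻¹ + (8 * Q)⁻¹ ≤ (2 * Q)⁻¹ := by
      have h1 : (8 * Q)⁻¹ + (8 * Q)⁻¹ = (4 * Q)⁻¹ := by
        field_simp
        ring
      have h2 : (4 * Q)⁻¹ ≤ (2 * Q)⁻¹ := by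
        apply inv_anti₀ (by positivity)
        linarith
      linarith
    have hsub : closedBall ((x : ℂ)) ((8 * Q)⁻¹) ⊆ closedBall (0 : ℂ) ((2 * Q)⁻¹) := by
      intro z hz
      rw [mem_closedBall, dist_eq_norm] at hz
      rw [mem_closedBall_zero_iff]
      calc ‖z‖ = ‖(z - (x : ℂ)) + (x : ℂ)‖ := by ring_nf
        _ ≤ ‖z - (x : ℂ)‖ + ‖(x : ℂ)‖ := norm_add_le _ _
        _ ≤ (8 * Q)⁻¹ + (8 * Q)⁻¹ := add_le_add hz hxnorm
        _ ≤ (2 * Q)⁻¹ := hquarter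
    have hE2 : DifferentiableOn ℂ E (closedBall ((x : ℂ)) ((8 * Q)⁻¹)) :=
      hEdiff.mono hsub
    set R2 : NNReal := ⟨(8 * Q)⁻¹, by positivity⟩ with hR2def
    have hR2coe : ((R2 : NNReal) : ℝ) = (8 * Q)⁻¹ := rfl
    have hR2pos : 0 < R2 := by
      rw [← NNReal.coe_lt_coe, hR2coe]
      positivity
    have hFP2 : HasFPowerSeriesOnBall E (cauchyPowerSeries E (x : ℂ) ((8 * Q)⁻¹)) (x : ℂ) R2 :=
      hE2.hasFPowerSeriesOnBall (R := R2) hR2pos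
    set p2 : FormalMultilinearSeries ℂ ℂ ℂ := cauchyPowerSeries E (x : ℂ) ((8 * Q)⁻¹) with hp2def
    -- bound for E on the sphere around x
    have hEsp : ∀ z ∈ Metric.sphere ((x : ℂ)) ((8 * Q)⁻¹), ‖E z‖ ≤ (2 : ℝ)⁻¹ ^ (b * q) := by
      intro z hz
      rw [mem_sphere_iff_norm] at hz
      have hz4 : ‖z‖ ≤ (4 * Q)⁻¹ := by
        have h1 : (8 * Q)⁻¹ + (8 * Q)⁻¹ = (4 * Q)⁻¹ := by field_simp; ring
        calc ‖z‖ = ‖(z - (x : ℂ)) + (x : ℂ)‖ := by ring_nf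
          _ ≤ ‖z - (x : ℂ)‖ + ‖(x : ℂ)‖ := norm_add_le _ _
          _ ≤ (8 * Q)⁻¹ + (8 * Q)⁻¹ := by rw [hz]; exact add_le_add le_rfl hxnorm
          _ = (4 * Q)⁻¹ := h1
      exact (htail z hz4).trans hdelta
    have hp2k : ‖p2 k‖ ≤ (2 : ℝ)⁻¹ ^ (b * q) * (8 * Q) ^ k := by
      have := cauchy_coeff_bound (f := E) (c := (x : ℂ)) (R := (8 * Q)⁻¹)
        (by positivity) (hE2.continuousOn.mono sphere_subset_closedBall) hEsp k
      rwa [inv_inv] at this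
    have hiter : iteratedDeriv k E (x : ℂ) = (k.factorial : ℂ) * (p2 k fun _ => 1) := by
      rw [iteratedDeriv_eq_iteratedFDeriv, ← hFP2.factorial_smul (1 : ℂ) k, nsmul_eq_mul]
    have hnormiter : ‖iteratedDeriv k E (x : ℂ)‖ ≤
        (k.factorial : ℝ) * ((2 : ℝ)⁻¹ ^ (b * q) * (8 * Q) ^ k) := by
      rw [hiter, norm_mul, Complex.norm_natCast]
      apply mul_le_mul_of_nonneg_left _ (by positivity)
      calc ‖p2 k fun _ => 1‖ ≤ ‖p2 k‖ := by
            rw [show (p2 k fun _ => (1:ℂ)) = p2.coeff k from rfl,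
              ← p2.norm_apply_eq_norm_coef (n := k)]
        _ ≤ (2 : ℝ)⁻¹ ^ (b * q) * (8 * Q) ^ k := hp2k
    rw [hstep1]
    calc |(iteratedDeriv k E (x : ℂ)).re| ≤ ‖iteratedDeriv k E (x : ℂ)‖ :=
        Complex.abs_re_le_norm _
      _ ≤ (k.factorial : ℝ) * ((2 : ℝ)⁻¹ ^ (b * q) * (8 * Q) ^ k) := hnormiter
      _ = (k.factorial : ℝ) * ((2 : ℝ)⁻¹) ^ (b * q) * (8 * Q) ^ k := by ring
  refine ⟨s, hsdeg, hmain, ?_⟩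
  -- the pointwise sandwich
  intro x hx
  have hfact : ∀ j ∈ Finset.Icc 1 q, ((j : ℝ) * x) ^ 2 ≤ 1 / 64 := by
    intro j hj
    obtain ⟨hj1, hj2⟩ := Finset.mem_Icc.mp hj
    have hjq : (j : ℝ) ≤ q := by exact_mod_cast hj2
    have habs : |(j : ℝ) * x| ≤ 1 / 8 := by
      rw [abs_mul, Nat.abs_cast]
      calc (j : ℝ) * |x| ≤ Q * (1 / (8 * Q)) := by
            apply mul_le_mul hjq hx (abs_nonneg x) (by positivity)
        _ = 1 / 8 := by
            field_simp
    rw [← _root_.sq_abs]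
    nlinarith [abs_nonneg ((j : ℝ) * x)]
  have hgpos : 0 < gq q x := by
    apply Finset.prod_pos
    intro j hj
    have h1 := hfact j hj
    have : (0 : ℝ) < 1 - ((j : ℝ) * x) ^ 2 := by linarith
    positivity
  have hgle : gq q x ≤ 1 := by
    apply Finset.prod_le_one
    · intro j hj
      have h1 := hfact j hj
      have : (0 : ℝ) ≤ 1 - ((j : ℝ) * x) ^ 2 := by linarith
      positivity
    · intro j hj
      apply pow_le_one₀
      · have h1 := hfact j hj
        linarith
      · nlinarith [sq_nonneg ((j : ℝ) * x)]
  have hg1 : (1 : ℝ) ≤ 1 / gq q x := by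
    rw [le_div_iff₀ hgpos]
    linarith
  have h0 := hmain 0 x hx
  simp only [iteratedDeriv_zero, Nat.factorial_zero, Nat.cast_one, one_mul, pow_zero,
    mul_one] at h0
  have hbq : (2 : ℝ)⁻¹ ^ (b * q) ≤ 2⁻¹ := by
    calc (2 : ℝ)⁻¹ ^ (b * q) ≤ (2 : ℝ)⁻¹ ^ 1 :=
        pow_le_pow_of_le_one (by norm_num) (by norm_num) (Nat.mul_pos hb hq)
      _ = 2⁻¹ := pow_one _
  obtain ⟨hl, hr⟩ := abs_le.mp h0
  clear_value s
  clear * - hl hr hbq hg1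
  constructor
  · linarith
  · linarith
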